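/- Let H ∈ HA_⊗̂ (topologically free Hopf k[[h]]-algebra) and K ∈ HA_⊗̃ with a Hopf pairing ⟨·,·⟩ : H × K → k[[h]]. Then for every y ∈ H' and every product c_1⋯c_n with c_i ∈ I_K := ε_K^{-1}(h k[[h]]), one has ⟨y, c_1 ⋯ c_n⟩ ∈ hⁿ k[[h]]. Consequently the pairing extends to a k[[h]]-valued pairing H' × K^∨ → k[[h]]. -/

import Mathlib

/- STATEMENT 16: Let H be a topologically free Hopf k[[h]]-algebra and K a
topological Hopf k[[h]]-algebra, with a Hopf pairing ⟨·,·⟩ : H × K → k[[h]].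
Then for every y ∈ H' and every product c_1⋯c_m with
c_i ∈ I_K := ε_K^{-1}(h k[[h]]), one has ⟨y, c_1 ⋯ c_m⟩ ∈ h^m k[[h]].
(Consequently the pairing extends to a k[[h]]-valued pairing
H' × K^∨ → k[[h]].) -/

open TensorProduct

noncomputable section

universe u

/-- A bundled `R`-algebra, used to form iterated tensor powers. -/
structure AlgB (R : Type u) [CommRing R] : Type (u + 1) where
  X : Type u
  [ring : Ring X]
  [alg : Algebra R X]

attribute [instance] AlgB.ring AlgB.alg

section Mach

variable (R H : Type u) [CommRing R] [Ring H] [Algebra R H]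

/-- The `n`-th tensor power `H^{⊗ n}` (with `H^{⊗ 0} = R`, `H^{⊗ 1} = H`). -/
def Tpow : ℕ → AlgB R
  | 0 => ⟨R⟩
  | 1 => ⟨H⟩
  | n + 2 => ⟨H ⊗[R] (Tpow (n + 1)).X⟩

/-- Apply a linear endomorphism of `H` in each tensor slot. -/
def tmap : (n : ℕ) → (Fin n → (H →ₗ[R] H)) → ((Tpow R H n).X →ₗ[R] (Tpow R H n).X)
  | 0, _ => LinearMap.id
  | 1, f => f 0
  | n + 2, f => TensorProduct.map (f 0) (tmap (n + 1) fun i => f i.succ)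

/-- The iterated coproduct `Δⁿ : H → H^{⊗ n}`, with `Δ⁰ = ε`, `Δ¹ = id`. -/
def Dit (cu : H →ₗ[R] R) (cm : H →ₗ[R] H ⊗[R] H) : (n : ℕ) → H →ₗ[R] (Tpow R H n).X
  | 0 => cu
  | 1 => LinearMap.id
  | n + 2 => (TensorProduct.map LinearMap.id (Dit cu cm (n + 1))) ∘ₗ cm

/-- `unit ∘ ε : H → H`. -/
def uem (cu : H →ₗ[R] R) : H →ₗ[R] H := (Algebra.linearMap R H) ∘ₗ cu

/-- `Δ_E : H → H^{⊗ n}`: the iterated coproduct inserted into the slots of `E`,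
with units (`unit ∘ ε`) in the slots outside `E`. -/
def DeltaE (cu : H →ₗ[R] R) (cm : H →ₗ[R] H ⊗[R] H) (n : ℕ) (E : Finset (Fin n)) :
    H →ₗ[R] (Tpow R H n).X :=
  (tmap R H n fun i => if i ∈ E then LinearMap.id else uem R H cu) ∘ₗ Dit R H cu cm n

/-- `δ_E := Σ_{E' ⊆ E} (-1)^{|E| - |E'|} Δ_{E'}`. -/
def deltaE (cu : H →ₗ[R] R) (cm : H →ₗ[R] H ⊗[R] H) (n : ℕ) (E : Finset (Fin n)) :
    H →ₗ[R] (Tpow R H n).X :=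
  ∑ E' ∈ E.powerset, ((-1 : ℤ) ^ (E.card - E'.card)) • DeltaE R H cu cm n E'

end Mach


section PairAux

variable {R H : Type u} [CommRing R] [Ring H] [Algebra R H]

/-- Slotwise pairing functional on `Tpow`. -/
def Phi : (n : ℕ) → (Fin n → (H →ₗ[R] R)) → ((Tpow R H n).X →ₗ[R] R)
  | 0, _ => LinearMap.id
  | 1, β => β 0
  | n + 2, β =>
      (LinearMap.mul' R R) ∘ₗ TensorProduct.map (β 0) (Phi (n + 1) fun i => β i.succ)

/-- Convolution of two functionals. -/
def conv (cm : H →ₗ[R] H ⊗[R] H) (β γ : H →ₗ[R] R) : H →ₗ[R] R :=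
  (LinearMap.mul' R R) ∘ₗ (TensorProduct.map β γ) ∘ₗ cm

/-- Iterated convolution of a list of functionals. -/
def Lam (cu : H →ₗ[R] R) (cm : H →ₗ[R] H ⊗[R] H) : List (H →ₗ[R] R) → (H →ₗ[R] R)
  | [] => cu
  | β :: L => conv cm β (Lam cu cm L)

variable (cu : H →ₗ[R] R) (cm : H →ₗ[R] H ⊗[R] H)

lemma conv_smul_left (s : R) (β γ : H →ₗ[R] R) :
    conv cm (s • β) γ = s • conv cm β γ := by
  ext x
  have : TensorProduct.map (s • β) γ = s • TensorProduct.map β γ := by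
    apply TensorProduct.ext'
    intro a b
    simp only [TensorProduct.map_tmul, LinearMap.smul_apply, TensorProduct.smul_tmul']
  simp [conv, this]

lemma conv_smul_right (s : R) (β γ : H →ₗ[R] R) :
    conv cm β (s • γ) = s • conv cm β γ := by
  ext x
  have : TensorProduct.map β (s • γ) = s • TensorProduct.map β γ := by
    apply TensorProduct.ext'
    intro a b
    simp only [TensorProduct.map_tmul, LinearMap.smul_apply, TensorProduct.tmul_smul]
  simp [conv, this]


/-- Deletion: slots with `s i • cu` factor out as scalars. -/
lemma Lam_mixed {ι : Type} (hL : ∀ γ : H →ₗ[R] R, conv cm cu γ = γ)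
    (φ : ι → (H →ₗ[R] R)) (s : ι → R) (p : ι → Prop) [DecidablePred p] :
    ∀ l : List ι,
      Lam cu cm (l.map fun i => if p i then φ i else s i • cu)
        = ((l.filter fun i => decide ¬ p i).map s).prod •
            Lam cu cm ((l.filter fun i => decide (p i)).map φ) := by
  intro l
  induction l with
  | nil => simp [Lam]
  | cons i l ih =>
      by_cases hi : p i
      · rw [List.map_cons, List.filter_cons_of_neg (by simp [hi]),
          List.filter_cons_of_pos (by simp [hi]), List.map_cons]
        show conv cm (if p i then φ i else s i • cu) _ = _
        rw [if_pos hi, ih, conv_smul_right]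
        rfl
      · rw [List.map_cons, List.filter_cons_of_pos (by simp [hi]),
          List.filter_cons_of_neg (by simp [hi]), List.map_cons, List.prod_cons]
        show conv cm (if p i then φ i else s i • cu) _ = _
        rw [if_neg hi, ih, conv_smul_right, conv_smul_left, hL, smul_smul, mul_comm]

lemma Phi_tmap : ∀ (n : ℕ) (β : Fin n → (H →ₗ[R] R)) (f : Fin n → (H →ₗ[R] H)),
    (Phi n β) ∘ₗ tmap R H n f = Phi n (fun i => (β i) ∘ₗ (f i))
  | 0, β, f => rfl
  | 1, β, f => rfl
  | n + 2, β, f => by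
      show ((LinearMap.mul' R R) ∘ₗ TensorProduct.map (β 0) (Phi (n + 1) fun i => β i.succ))
          ∘ₗ TensorProduct.map (f 0) (tmap R H (n + 1) fun i => f i.succ) = _
      rw [LinearMap.comp_assoc, ← TensorProduct.map_comp,
        Phi_tmap (n + 1) (fun i => β i.succ) (fun i => f i.succ)]
      rfl

lemma Phi_Dit (hR : ∀ β : H →ₗ[R] R, conv cm β cu = β) :
    ∀ (n : ℕ) (β : Fin n → (H →ₗ[R] R)),
      (Phi n β) ∘ₗ Dit R H cu cm n = Lam cu cm (List.ofFn β)
  | 0, β => by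
      show LinearMap.id ∘ₗ cu = Lam cu cm []
      simp [Lam]
  | 1, β => by
      show (β 0) ∘ₗ LinearMap.id = Lam cu cm (List.ofFn β)
      rw [List.ofFn_succ]
      simp only [List.ofFn_zero]
      show β 0 ∘ₗ LinearMap.id = conv cm (β 0) (Lam cu cm [])
      show β 0 ∘ₗ LinearMap.id = conv cm (β 0) cu
      rw [hR]
      rfl
  | n + 2, β => by
      show ((LinearMap.mul' R R) ∘ₗ TensorProduct.map (β 0) (Phi (n + 1) fun i => β i.succ))
          ∘ₗ ((TensorProduct.map LinearMap.id (Dit R H cu cm (n + 1))) ∘ₗ cm) = _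
      rw [← LinearMap.comp_assoc cm, LinearMap.comp_assoc _ _ (LinearMap.mul' R R),
        ← TensorProduct.map_comp, Phi_Dit hR (n + 1) (fun i => β i.succ), LinearMap.comp_id]
      conv_rhs => rw [List.ofFn_succ]
      rfl

lemma Phi_DeltaE (hR : ∀ β : H →ₗ[R] R, conv cm β cu = β)
    (n : ℕ) (β : Fin n → (H →ₗ[R] R)) (E : Finset (Fin n)) :
    (Phi n β) ∘ₗ DeltaE R H cu cm n E
      = Lam cu cm (List.ofFn fun i => if i ∈ E then β i else (β i) ∘ₗ uem R H cu) := by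
  rw [DeltaE, ← LinearMap.comp_assoc, Phi_tmap]
  have : (fun i => (β i) ∘ₗ (if i ∈ E then LinearMap.id else uem R H cu))
      = fun i => if i ∈ E then β i else (β i) ∘ₗ uem R H cu := by
    funext i
    by_cases hi : i ∈ E <;> simp [hi]
  rw [this, Phi_Dit cu cm hR]

end PairAux

section CoalgAux

variable {R H : Type u} [CommRing R] [Ring H] [Algebra R H] [Coalgebra R H]

lemma lid_eq_mul' (z : R ⊗[R] R) :
    TensorProduct.lid R R z = LinearMap.mul' R R z := by
  induction z with
  | zero => simp
  | tmul r s => simp [TensorProduct.lid_tmul, LinearMap.mul'_apply, smul_eq_mul]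
  | add x y hx hy => simp [map_add, hx, hy]

lemma conv_counit_left (γ : H →ₗ[R] R) :
    conv (Coalgebra.comul) (Coalgebra.counit) γ = γ := by
  ext x
  show LinearMap.mul' R R (TensorProduct.map Coalgebra.counit γ (Coalgebra.comul x)) = γ x
  have h1 : TensorProduct.map (Coalgebra.counit (R := R) (A := H)) γ
      = TensorProduct.map LinearMap.id γ ∘ₗ LinearMap.rTensor H Coalgebra.counit := by
    rw [LinearMap.rTensor, ← TensorProduct.map_comp, LinearMap.id_comp, LinearMap.comp_id]
  rw [h1, LinearMap.comp_apply, Coalgebra.rTensor_counit_comul, TensorProduct.map_tmul]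
  simp [LinearMap.mul'_apply]

lemma conv_counit_right (β : H →ₗ[R] R) :
    conv (Coalgebra.comul) β (Coalgebra.counit) = β := by
  ext x
  show LinearMap.mul' R R (TensorProduct.map β Coalgebra.counit (Coalgebra.comul x)) = β x
  have h1 : TensorProduct.map β (Coalgebra.counit (R := R) (A := H))
      = TensorProduct.map β LinearMap.id ∘ₗ LinearMap.lTensor H Coalgebra.counit := by
    rw [LinearMap.lTensor, ← TensorProduct.map_comp, LinearMap.id_comp, LinearMap.comp_id]
  rw [h1, LinearMap.comp_apply, Coalgebra.lTensor_counit_comul, TensorProduct.map_tmul]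
  simp [LinearMap.mul'_apply]

variable {K : Type u} [Ring K] [Algebra R K] [Coalgebra R K]

lemma pair_prod (B : H →ₗ[R] K →ₗ[R] R)
    (hB1 : ∀ (x : H) (y₁ y₂ : K), B x (y₁ * y₂) =
      (TensorProduct.lid R R)
        (TensorProduct.map (B.flip y₁) (B.flip y₂) (Coalgebra.comul x)))
    (hB3 : ∀ x : H, B x 1 = Coalgebra.counit x) :
    ∀ (L : List K) (y : H),
      B y L.prod = Lam Coalgebra.counit Coalgebra.comul (L.map (fun c => B.flip c)) y := by
  intro L
  induction L with
  | nil => intro y; simpa [Lam] using hB3 y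
  | cons c L ih =>
      intro y
      have hflip : (B.flip L.prod) = Lam Coalgebra.counit Coalgebra.comul
          (L.map (fun c => B.flip c)) := LinearMap.ext ih
      rw [List.prod_cons, hB1, lid_eq_mul', List.map_cons]
      show _ = conv Coalgebra.comul (B.flip c) (Lam _ _ (L.map (fun c => B.flip c))) y
      rw [← hflip]
      rfl

lemma flip_comp_uem (B : H →ₗ[R] K →ₗ[R] R)
    (hB4 : ∀ y : K, B 1 y = Coalgebra.counit y) (c : K) :
    (B.flip c) ∘ₗ uem R H (Coalgebra.counit)
      = (Coalgebra.counit c : R) • (Coalgebra.counit : H →ₗ[R] R) := by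
  ext x
  show B ((Algebra.linearMap R H) (Coalgebra.counit x)) c = _
  rw [Algebra.linearMap_apply, Algebra.algebraMap_eq_smul_one, map_smul]
  simp only [LinearMap.smul_apply, hB4 c, smul_eq_mul]
  rw [mul_comm]

end CoalgAux

section Combi

lemma ofFn_eq_of_length {α : Type u} (l : List α) (k : ℕ) (h : l.length = k) :
    List.ofFn (fun i : Fin k => l[(i : ℕ)]'(h ▸ i.2)) = l := by
  subst h
  exact List.ofFn_getElem (xs := l)

lemma filter_finRange_eq_sort {n : ℕ} (F : Finset (Fin n)) :
    (List.finRange n).filter (fun j => decide (j ∈ F)) = F.sort (· ≤ ·) := by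
  haveI : IsAntisymm (Fin n) (· < ·) := ⟨fun a b h1 h2 => (lt_asymm h1 h2).elim⟩
  refine (fun hp h1 h2 => List.Perm.eq_of_pairwise' (r := (· < ·)) h1 h2 hp) ?_ ?_ ?_
  · refine (List.perm_ext_iff_of_nodup ?_ ?_).2 ?_
    · exact (List.nodup_finRange n).filter _
    · exact F.sort_nodup _
    · intro a
      simp [List.mem_filter, Finset.mem_sort]
  · exact (List.pairwise_lt_finRange n).filter _
  · exact F.sortedLT_sort.pairwise

lemma map_sort_eq_sort_map {t m : ℕ} (f : Fin t ↪ Fin m)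
    (hf : StrictMono f) (G : Finset (Fin t)) :
    (G.sort (· ≤ ·)).map f = (G.map f).sort (· ≤ ·) := by
  haveI : IsAntisymm (Fin m) (· < ·) := ⟨fun a b h1 h2 => (lt_asymm h1 h2).elim⟩
  refine (fun hp h1 h2 => List.Perm.eq_of_pairwise' (r := (· < ·)) h1 h2 hp) ?_ ?_ ?_
  · refine (List.perm_ext_iff_of_nodup ?_ ?_).2 ?_
    · exact (G.sort_nodup _).map f.injective
    · exact (G.map f).sort_nodup _
    · intro a
      simp only [List.mem_map, Finset.mem_sort, Finset.mem_map]
  · exact (G.sortedLT_sort.pairwise).map f (fun a b h => hf h)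
  · exact ((G.map f).sortedLT_sort).pairwise

lemma prod_map_sort {α : Type u} [CommMonoid α] {n : ℕ} (F : Finset (Fin n))
    (s : Fin n → α) :
    ((F.sort (· ≤ ·)).map s).prod = ∏ j ∈ F, s j := by
  rw [Finset.prod_eq_multiset_prod, ← Finset.sort_eq F (· ≤ ·), Multiset.map_coe,
    Multiset.prod_coe]

end Combi

section Mobius

variable {R : Type u} [CommRing R] {M : Type u} [AddCommGroup M] [Module R M]

lemma sum_sign_powerset {ι : Type} [DecidableEq ι] (E F : Finset ι) (hFE : F ⊆ E) :
    (∑ G ∈ E.powerset.filter (fun G => F ⊆ G), ((-1 : R) ^ (G.card - F.card)))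
      = if F = E then 1 else 0 := by
  have key : (∑ G ∈ E.powerset.filter (fun G => F ⊆ G), ((-1 : R) ^ (G.card - F.card)))
      = ∑ D ∈ (E \ F).powerset, ((-1 : R) ^ D.card) := by
    apply Finset.sum_nbij' (fun G => G \ F) (fun D => F ∪ D)
    · intro G hG
      simp only [Finset.mem_filter, Finset.mem_powerset] at hG
      exact Finset.mem_powerset.2 (Finset.sdiff_subset_sdiff hG.1 le_rfl)
    · intro D hD
      simp only [Finset.mem_powerset] at hD
      refine Finset.mem_filter.2 ⟨Finset.mem_powerset.2 ?_, Finset.subset_union_left⟩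
      exact Finset.union_subset hFE (hD.trans Finset.sdiff_subset)
    · intro G hG
      simp only [Finset.mem_filter, Finset.mem_powerset] at hG
      exact Finset.union_sdiff_of_subset hG.2
    · intro D hD
      simp only [Finset.mem_powerset] at hD
      exact Finset.union_sdiff_cancel_left ((Finset.sdiff_disjoint.mono_left hD).symm)
    · intro G hG
      simp only [Finset.mem_filter, Finset.mem_powerset] at hG
      rw [Finset.card_sdiff_of_subset hG.2]
  have cast1 : (∑ D ∈ (E \ F).powerset, ((-1 : R) ^ D.card))
      = ((∑ D ∈ (E \ F).powerset, ((-1 : ℤ) ^ D.card) : ℤ) : R) := by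
    push_cast
    rfl
  rw [key, cast1, Finset.sum_powerset_neg_one_pow_card]
  by_cases h : F = E
  · subst h; simp
  · rw [if_neg h, if_neg, Int.cast_zero]
    intro hempty
    exact h (Finset.Subset.antisymm hFE (Finset.sdiff_eq_empty_iff_subset.1 hempty))

lemma prod_sdiff_merge {ι : Type} [DecidableEq ι] (s : ι → R) {E F G : Finset ι}
    (hFG : F ⊆ G) (hGE : G ⊆ E) :
    (∏ j ∈ E \ G, s j) * (∏ j ∈ G \ F, s j) = ∏ j ∈ E \ F, s j := by
  rw [← Finset.prod_union]
  · congr 1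
    ext a
    simp only [Finset.mem_union, Finset.mem_sdiff]
    constructor
    · rintro (⟨h1, h2⟩ | ⟨h1, h2⟩)
      · exact ⟨h1, fun hF => h2 (hFG hF)⟩
      · exact ⟨hGE h1, h2⟩
    · rintro ⟨h1, h2⟩
      by_cases hG : a ∈ G
      · exact Or.inr ⟨hG, h2⟩
      · exact Or.inl ⟨h1, hG⟩
  · rw [Finset.disjoint_left]
    intro a ha hb
    exact (Finset.mem_sdiff.1 ha).2 (Finset.mem_sdiff.1 hb).1

lemma mobius {ι : Type} [DecidableEq ι] (s : ι → R) (p : Finset ι → M) (E : Finset ι) :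
    ∑ G ∈ E.powerset, (∏ j ∈ E \ G, s j) •
      (∑ F ∈ G.powerset, ((-1 : R) ^ (G.card - F.card) * ∏ j ∈ G \ F, s j) • p F) = p E := by
  have step1 : ∀ G ∈ E.powerset,
      (∏ j ∈ E \ G, s j) •
        (∑ F ∈ G.powerset, ((-1 : R) ^ (G.card - F.card) * ∏ j ∈ G \ F, s j) • p F)
      = ∑ F ∈ G.powerset, ((-1 : R) ^ (G.card - F.card) * ∏ j ∈ E \ F, s j) • p F := by
    intro G hG
    rw [Finset.smul_sum]
    apply Finset.sum_congr rfl
    intro F hF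
    rw [smul_smul, ← mul_assoc, mul_comm (∏ j ∈ E \ G, s j), mul_assoc,
      prod_sdiff_merge s (Finset.mem_powerset.1 hF) (Finset.mem_powerset.1 hG)]
  rw [Finset.sum_congr rfl step1]
  rw [Finset.sum_comm' (s' := fun F => E.powerset.filter (fun G => F ⊆ G)) (t' := E.powerset)
    (by
      intro G F
      simp only [Finset.mem_powerset, Finset.mem_filter]
      constructor
      · rintro ⟨h1, h2⟩; exact ⟨⟨h1, h2⟩, h2.trans h1⟩
      · rintro ⟨⟨h1, h2⟩, h3⟩; exact ⟨h1, h2⟩)]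
  have hfilE : E.powerset.filter (fun G => E ⊆ G) = {E} := by
    ext G
    simp only [Finset.mem_filter, Finset.mem_powerset, Finset.mem_singleton]
    constructor
    · rintro ⟨h1, h2⟩; exact Finset.Subset.antisymm h1 h2
    · rintro rfl; exact ⟨le_rfl, le_rfl⟩
  rw [Finset.sum_eq_single E]
  · rw [hfilE, Finset.sum_singleton, Nat.sub_self, pow_zero, Finset.sdiff_self,
      Finset.prod_empty, mul_one, one_smul]
  · intro F hF hFE
    have hsum : ∀ G ∈ E.powerset.filter (fun G => F ⊆ G),
        ((-1 : R) ^ (G.card - F.card) * ∏ j ∈ E \ F, s j) • p F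
          = ((-1 : R) ^ (G.card - F.card)) • ((∏ j ∈ E \ F, s j) • p F) := by
      intro G _
      rw [mul_smul]
    rw [Finset.sum_congr rfl hsum, ← Finset.sum_smul,
      sum_sign_powerset E F (Finset.mem_powerset.1 hF), if_neg hFE, zero_smul]
  · intro h
    exact absurd (Finset.mem_powerset.2 le_rfl) h

end Mobius

/-- Drinfeld's subset `H' = { a ∈ H | δ_n(a) ∈ tⁿ·H^{⊗n} for all n }`. -/
def Hset (R H : Type u) [CommRing R] [Ring H] [Algebra R H]
    (cu : H →ₗ[R] R) (cm : H →ₗ[R] H ⊗[R] H) (t : R) : Set H :=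
  {a : H | ∀ n : ℕ, ∃ y : (Tpow R H n).X, deltaE R H cu cm n Finset.univ a = t ^ n • y}

section Claim2

variable {R H K : Type u} [CommRing R] [Ring H] [Algebra R H] [Coalgebra R H]
  [Ring K] [Algebra R K] [Coalgebra R K]

lemma claim2 (B : H →ₗ[R] K →ₗ[R] R)
    (hB4 : ∀ y : K, B 1 y = Coalgebra.counit y)
    (x : R) (y : H)
    (hy : y ∈ Hset R H Coalgebra.counit Coalgebra.comul x)
    {m : ℕ} (c : Fin m → K) (E : Finset (Fin m)) :
    ∃ w : R,
      (∑ F ∈ E.powerset,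
        ((-1 : R) ^ (E.card - F.card) *
            ∏ j ∈ E \ F, (Coalgebra.counit (c j) : R)) •
          (Lam Coalgebra.counit Coalgebra.comul
            ((F.sort (· ≤ ·)).map (fun j => B.flip (c j))) y))
      = x ^ E.card * w := by
  classical
  set cu : H →ₗ[R] R := Coalgebra.counit with hcu
  set cm : H →ₗ[R] H ⊗[R] H := Coalgebra.comul with hcm
  set φ : Fin m → (H →ₗ[R] R) := fun j => B.flip (c j) with hφ
  set s : Fin m → R := fun j => (Coalgebra.counit (c j) : R) with hs
  set t := E.card with ht
  set e := E.orderEmbOfFin (rfl : E.card = t) with he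
  set eEmb : Fin t ↪ Fin m := e.toEmbedding with heEmb
  set γ : Fin t → (H →ₗ[R] R) := fun i => φ (eEmb i) with hγ
  obtain ⟨z, hz⟩ := hy t
  refine ⟨Phi t γ z, ?_⟩
  have hmapuniv : Finset.map eEmb Finset.univ = E := by
    ext x
    simp only [Finset.mem_map, Finset.mem_univ, true_and]
    constructor
    · rintro ⟨i, rfl⟩; exact E.orderEmbOfFin_mem _ i
    · intro hx
      have : x ∈ Set.range e := by
        rw [Finset.range_orderEmbOfFin]; exact hx
      obtain ⟨i, hi⟩ := this
      exact ⟨i, hi⟩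
  -- the main computation
  have main : Phi t γ (deltaE R H cu cm t Finset.univ y)
      = ∑ F ∈ E.powerset,
          ((-1 : R) ^ (E.card - F.card) * ∏ j ∈ E \ F, s j) •
            (Lam cu cm ((F.sort (· ≤ ·)).map φ) y) := by
    rw [deltaE, LinearMap.sum_apply, map_sum]
    have step : ∀ G' ∈ (Finset.univ : Finset (Fin t)).powerset,
        Phi t γ ((((-1 : ℤ) ^ ((Finset.univ : Finset (Fin t)).card - G'.card)) •
            DeltaE R H cu cm t G') y)
          = ((-1 : R) ^ (t - G'.card) * ∏ j ∈ E \ (G'.map eEmb), s j) •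
              (Lam cu cm (((G'.map eEmb).sort (· ≤ ·)).map φ) y) := by
      intro G' _
      rw [LinearMap.smul_apply, map_zsmul]
      have h1 : Phi t γ (DeltaE R H cu cm t G' y)
          = Lam cu cm (List.ofFn fun i =>
              if i ∈ G' then γ i else (γ i) ∘ₗ uem R H cu) y := by
        rw [← LinearMap.comp_apply, Phi_DeltaE cu cm (conv_counit_right)]
      have h2 : (fun i => if i ∈ G' then γ i else (γ i) ∘ₗ uem R H cu)
          = fun i => if i ∈ G' then γ i else s (e i) • cu := by
        funext i
        by_cases hi : i ∈ G'
        · simp [hi]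
        · simp only [if_neg hi, hγ, hφ, hs, hcu]
          exact flip_comp_uem B hB4 (c (eEmb i))
      rw [h1, h2, List.ofFn_eq_map,
        Lam_mixed cu cm conv_counit_left γ (fun i => s (e i)) (· ∈ G') (List.finRange t),
        LinearMap.smul_apply]
      have hfil1 : (List.finRange t).filter (fun i => decide ¬ (i ∈ G'))
          = (Finset.univ \ G').sort (· ≤ ·) := by
        have hpred : (fun i => decide ¬ (i ∈ G'))
            = (fun i : Fin t => decide (i ∈ Finset.univ \ G')) := by
          funext i; simp
        rw [hpred, filter_finRange_eq_sort]
      have hfil2 : (List.finRange t).filter (fun i => decide (i ∈ G'))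
          = G'.sort (· ≤ ·) := filter_finRange_eq_sort G'
      rw [hfil1, hfil2]
      have hprod : (((Finset.univ \ G').sort (· ≤ ·)).map (fun i => s (e i))).prod
          = ∏ j ∈ E \ (G'.map eEmb), s j := by
        rw [prod_map_sort]
        show (∏ j ∈ Finset.univ \ G', s (eEmb j)) = _
        rw [← Finset.prod_map]
        congr 1
        ext j
        simp only [Finset.mem_map, Finset.mem_sdiff, Finset.mem_univ, true_and]
        constructor
        · rintro ⟨i, hi, rfl⟩
          refine ⟨by rw [← hmapuniv]; exact Finset.mem_map_of_mem _ (Finset.mem_univ i), ?_⟩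
          rintro ⟨i', hi', hii'⟩
          exact hi (by rwa [← eEmb.injective hii'])
        · rintro ⟨hjE, hj⟩
          rw [← hmapuniv] at hjE
          obtain ⟨i, -, rfl⟩ := Finset.mem_map.1 hjE
          exact ⟨i, fun hiG => hj ⟨i, hiG, rfl⟩, rfl⟩
      have hlam : ((G'.sort (· ≤ ·)).map γ)
          = ((G'.map eEmb).sort (· ≤ ·)).map φ := by
        rw [hγ, show (fun i => φ (eEmb i)) = φ ∘ eEmb from rfl, ← List.map_map,
          map_sort_eq_sort_map eEmb (fun a b hab => e.strictMono hab)]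
      rw [hprod, hlam]
      have hcarduniv : (Finset.univ : Finset (Fin t)).card = t := by
        simp [Finset.card_univ]
      rw [hcarduniv, zsmul_eq_mul]
      simp only [smul_eq_mul]
      push_cast
      ring
    rw [Finset.sum_congr rfl step]
    -- reindex the sum
    apply Finset.sum_nbij' (fun G' => G'.map eEmb)
      (fun F => Finset.univ.filter (fun i => e i ∈ F))
    · intro G' _
      rw [Finset.mem_powerset, ← hmapuniv]
      exact Finset.map_subset_map.2 (Finset.subset_univ G')
    · intro F _
      exact Finset.mem_powerset.2 (Finset.filter_subset _ _)
    · intro G' _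
      ext i
      simp only [Finset.mem_filter, Finset.mem_univ, true_and, Finset.mem_map]
      constructor
      · rintro ⟨i', hi', hii'⟩
        rwa [← eEmb.injective hii']
      · intro hi; exact ⟨i, hi, rfl⟩
    · intro F hF
      rw [Finset.mem_powerset] at hF
      ext j
      simp only [Finset.mem_map, Finset.mem_filter, Finset.mem_univ, true_and]
      constructor
      · rintro ⟨i, hi, rfl⟩; exact hi
      · intro hj
        have : j ∈ Finset.map eEmb Finset.univ := by rw [hmapuniv]; exact hF hj
        obtain ⟨i, -, rfl⟩ := Finset.mem_map.1 this
        exact ⟨i, hj, rfl⟩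
    · intro G' _
      rw [Finset.card_map]
  rw [← main, hz, map_smul, smul_eq_mul]

end Claim2
theorem statement16 (k : Type) [Field k]
    (H K : Type) [Ring H] [HopfAlgebra (PowerSeries k) H]
    [Ring K] [HopfAlgebra (PowerSeries k) K]
    -- H is topologically free:
    (htf : ∀ a : H, (PowerSeries.X : PowerSeries k) • a = 0 → a = 0)
    [IsAdicComplete (Ideal.span {(PowerSeries.X : PowerSeries k)}) H]
    -- the Hopf pairing:
    (B : H →ₗ[PowerSeries k] K →ₗ[PowerSeries k] PowerSeries k)
    (hB1 : ∀ (x : H) (y₁ y₂ : K), B x (y₁ * y₂) =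
      (TensorProduct.lid (PowerSeries k) (PowerSeries k))
        (TensorProduct.map (B.flip y₁) (B.flip y₂) (Coalgebra.comul x)))
    (hB2 : ∀ (x₁ x₂ : H) (y : K), B (x₁ * x₂) y =
      (TensorProduct.lid (PowerSeries k) (PowerSeries k))
        (TensorProduct.map (B x₁) (B x₂) (Coalgebra.comul y)))
    (hB3 : ∀ x : H, B x 1 = Coalgebra.counit x)
    (hB4 : ∀ y : K, B 1 y = Coalgebra.counit y)
    (hB5 : ∀ (x : H) (y : K),
      B ((HopfAlgebra.antipode (PowerSeries k) : H →ₗ[PowerSeries k] H) x) y =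
        B x ((HopfAlgebra.antipode (PowerSeries k) : K →ₗ[PowerSeries k] K) y)) :
    ∀ y ∈ Hset (PowerSeries k) H Coalgebra.counit Coalgebra.comul PowerSeries.X,
      ∀ (m : ℕ) (c : Fin m → K),
        (∀ i, (Coalgebra.counit : K →ₗ[PowerSeries k] PowerSeries k) (c i) ∈
          Ideal.span {(PowerSeries.X : PowerSeries k)}) →
        B y (List.ofFn c).prod ∈
          Ideal.span {(PowerSeries.X : PowerSeries k) ^ m} := by
  intro y hy m c hc
  classical
  rw [Ideal.mem_span_singleton]
  have h0 : B y (List.ofFn c).prod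
      = Lam Coalgebra.counit Coalgebra.comul
          (((Finset.univ : Finset (Fin m)).sort (· ≤ ·)).map (fun j => B.flip (c j))) y := by
    rw [pair_prod B hB1 hB3 (List.ofFn c) y, List.ofFn_eq_map, List.map_map, Fin.sort_univ]
    rfl
  have hmob := mobius (R := PowerSeries k) (M := PowerSeries k)
    (fun j => (Coalgebra.counit (c j) : PowerSeries k))
    (fun F => Lam Coalgebra.counit Coalgebra.comul
      ((F.sort (· ≤ ·)).map (fun j => B.flip (c j))) y) Finset.univ
  rw [h0, ← hmob]
  apply Finset.dvd_sum
  intro G hG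
  obtain ⟨w, hw⟩ := claim2 B hB4 PowerSeries.X y hy c G
  rw [hw, smul_eq_mul]
  have hcard : G.card ≤ m := by
    simpa using Finset.card_le_univ G
  have hdvd : (PowerSeries.X : PowerSeries k) ^ (m - G.card)
      ∣ ∏ j ∈ Finset.univ \ G, (Coalgebra.counit (c j) : PowerSeries k) := by
    have h1 : (PowerSeries.X : PowerSeries k) ^ ((Finset.univ \ G).card)
        ∣ ∏ j ∈ Finset.univ \ G, (Coalgebra.counit (c j) : PowerSeries k) := by
      rw [← Finset.prod_const]
      exact Finset.prod_dvd_prod_of_dvd _ _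
        (fun j _ => Ideal.mem_span_singleton.1 (hc j))
    rwa [Finset.card_sdiff_of_subset (Finset.subset_univ G), Finset.card_univ,
      Fintype.card_fin] at h1
  have hXm : (PowerSeries.X : PowerSeries k) ^ m
      = PowerSeries.X ^ (m - G.card) * PowerSeries.X ^ G.card := by
    rw [← pow_add, Nat.sub_add_cancel hcard]
  rw [hXm]
  exact mul_dvd_mul hdvd (dvd_mul_right _ w)

end
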